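/- Let A be a symmetric n×n real matrix with d = A·1 and h = A·d having all entries strictly positive. Then the matrix Ā = diag(h)⁻¹ A diag(d) is diagonalizable over ℝ: there exist an invertible real matrix S and a real diagonal matrix Σ with Ā = S⁻¹ Σ S. -/

import Mathlib

open Matrix

/-- If `A` is symmetric and `d = A·1`, `h = A·d` have positive entries,
then `Ā = diag(h)⁻¹ A diag(d)` is diagonalizable over ℝ: `Ā = S⁻¹ Σ S` with `S`
invertible and `Σ` real diagonal. -/
theorem stmt3 {n : ℕ} (A : Matrix (Fin n) (Fin n) ℝ) (hsymm : A.IsSymm)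
    (d h : Fin n → ℝ) (hd : d = A *ᵥ 1) (hh : h = A *ᵥ d)
    (hdpos : ∀ i, 0 < d i) (hhpos : ∀ i, 0 < h i)
    (Abar : Matrix (Fin n) (Fin n) ℝ)
    (hAbar : Abar = (Matrix.diagonal h)⁻¹ * A * Matrix.diagonal d) :
    ∃ (S : Matrix (Fin n) (Fin n) ℝ) (σ : Fin n → ℝ),
      IsUnit S ∧ Abar = S⁻¹ * Matrix.diagonal σ * S := by
  set m : Fin n → ℝ := fun i => Real.sqrt (d i * h i) with hm
  have hmpos : ∀ i, 0 < m i := fun i => Real.sqrt_pos.2 (mul_pos (hdpos i) (hhpos i))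
  have hmne : ∀ i, m i ≠ 0 := fun i => (hmpos i).ne'
  have hmsq : ∀ i, m i * m i = d i * h i := fun i =>
    Real.mul_self_sqrt (mul_pos (hdpos i) (hhpos i)).le
  have hinvd : (Matrix.diagonal m)⁻¹ = Matrix.diagonal (fun i => (m i)⁻¹) :=
    Matrix.inv_eq_right_inv (by
      rw [Matrix.diagonal_mul_diagonal]
      convert Matrix.diagonal_one using 2
      funext i
      exact mul_inv_cancel₀ (hmne i))
  have hinvh : (Matrix.diagonal h)⁻¹ = Matrix.diagonal (fun i => (h i)⁻¹) :=
    Matrix.inv_eq_right_inv (by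
      rw [Matrix.diagonal_mul_diagonal]
      convert Matrix.diagonal_one using 2
      funext i
      exact mul_inv_cancel₀ (hhpos i).ne')
  have h1 : (Matrix.diagonal m)⁻¹ * Matrix.diagonal m = 1 := by
    rw [hinvd, Matrix.diagonal_mul_diagonal]
    convert Matrix.diagonal_one using 2
    funext i
    exact inv_mul_cancel₀ (hmne i)
  set C : Matrix (Fin n) (Fin n) ℝ :=
    Matrix.diagonal m * Abar * (Matrix.diagonal m)⁻¹ with hCdef
  have hCentry : ∀ i j, C i j = m i * ((h i)⁻¹ * A i j * d j) * (m j)⁻¹ := by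
    intro i j
    simp [hCdef, hinvd, hinvh, hAbar, Matrix.mul_apply, Matrix.diagonal_apply,
      Finset.sum_ite_eq, Finset.sum_ite_eq']
  have hAsym : ∀ i j, A j i = A i j := by
    intro i j
    conv_lhs => rw [← hsymm]
    simp [Matrix.transpose_apply]
  have hC : C.IsHermitian := by
    rw [Matrix.IsHermitian]
    ext i j
    simp only [Matrix.conjTranspose_apply, star_trivial]
    rw [hCentry i j, hCentry j i, hAsym i j]
    field_simp [hmne i, hmne j, (hhpos i).ne', (hhpos j).ne']
    first
    | linear_combination A i j * d i * h i * hmsq j - A i j * d j * h j * hmsq i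
    | linear_combination A i j * d j * h j * hmsq i - A i j * d i * h i * hmsq j
    | nlinarith [hmsq i, hmsq j]
  have hspec := hC.spectral_theorem
  set V : Matrix (Fin n) (Fin n) ℝ :=
    (Matrix.IsHermitian.eigenvectorUnitary hC : Matrix (Fin n) (Fin n) ℝ) with hV
  have hVunit' : star V * V = 1 :=
    (Matrix.mem_unitaryGroup_iff').mp (Matrix.IsHermitian.eigenvectorUnitary hC).2
  refine ⟨star V * Matrix.diagonal m, hC.eigenvalues, ?_, ?_⟩
  · have hDm1 : Matrix.diagonal m * Matrix.diagonal (fun i => (m i)⁻¹) = 1 := by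
      rw [Matrix.diagonal_mul_diagonal]
      convert Matrix.diagonal_one using 2
      funext i
      exact mul_inv_cancel₀ (hmne i)
    have hST : star V * Matrix.diagonal m * ((Matrix.diagonal fun i => (m i)⁻¹) * V) = 1 := by
      rw [Matrix.mul_assoc, ← Matrix.mul_assoc (Matrix.diagonal m), hDm1, Matrix.one_mul,
        hVunit']
    exact ⟨⟨_, _, hST, mul_eq_one_comm.mp hST⟩, rfl⟩
  · have hSinv : (star V * Matrix.diagonal m)⁻¹ = (Matrix.diagonal m)⁻¹ * V := by
      rw [Matrix.mul_inv_rev]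
      congr 1
      exact Matrix.inv_eq_right_inv hVunit'
    rw [hSinv]
    have hdiag : Matrix.diagonal (RCLike.ofReal ∘ hC.eigenvalues)
        = Matrix.diagonal hC.eigenvalues := by
      congr 1
    have key : (Matrix.diagonal m)⁻¹ * V * Matrix.diagonal hC.eigenvalues
          * (star V * Matrix.diagonal m)
        = (Matrix.diagonal m)⁻¹
          * (V * Matrix.diagonal (RCLike.ofReal ∘ hC.eigenvalues) * star V)
          * Matrix.diagonal m := by
      rw [hdiag]
      noncomm_ring
    rw [Unitary.conjStarAlgAut_apply, ← hV] at hspec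
    rw [← hspec] at key
    rw [key, hCdef]
    rw [show Matrix.diagonal m * Abar * (Matrix.diagonal m)⁻¹
        = Matrix.diagonal m * (Abar * (Matrix.diagonal m)⁻¹) from by
      rw [Matrix.mul_assoc]]
    rw [← Matrix.mul_assoc, h1, Matrix.one_mul, Matrix.mul_assoc, h1, Matrix.mul_one]
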